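/- For p random variables X₁,…,X_p each uniformly distributed and mutually independent on {1,…,m}, the matrix Q ∈ ℝ^{pm×pm} with Q_{m(i−1)+k, m(j−1)+ℓ} = P(Xᵢ=k, Xⱼ=ℓ) (equal to 1/m² for i≠j and (1/m)·𝟙{k=ℓ} for i=j) has rank exactly (m−1)p + 1. -/

import Mathlib

open Matrix Finset Module

/-- For independent uniform `X₁, …, X_p` on `{1, …, m}`, the pairwise-marginal
matrix `Q` has rank exactly `(m-1)p + 1`. -/
theorem rank_uniform_pairwise_matrix (p m : ℕ) (hp : 0 < p) (hm : 0 < m) :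
    (Matrix.of fun q q' : Fin p × Fin m =>
      if q.1 = q'.1 then (if q.2 = q'.2 then (1 : ℝ) / m else 0)
      else 1 / (m ^ 2 : ℝ)).rank = (m - 1) * p + 1 := by
  set Q : Matrix (Fin p × Fin m) (Fin p × Fin m) ℝ :=
    Matrix.of fun q q' : Fin p × Fin m =>
      if q.1 = q'.1 then (if q.2 = q'.2 then (1 : ℝ) / m else 0)
      else 1 / (m ^ 2 : ℝ) with hQ
  have hm0 : (m : ℝ) ≠ 0 := Nat.cast_ne_zero.mpr hm.ne'
  -- key formula for mulVec
  have key : ∀ (v : Fin p × Fin m → ℝ) (q : Fin p × Fin m),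
      Q.mulVec v q = (1/m) * v q + (1/m^2) * ((∑ r, v r) - ∑ l, v (q.1, l)) := by
    intro v q
    obtain ⟨i, k⟩ := q
    simp only [Matrix.mulVec, dotProduct, hQ, Matrix.of_apply]
    rw [Fintype.sum_prod_type]
    have step : ∀ j : Fin p,
        (∑ l, (if (i,k).1 = (j,l).1 then (if (i,k).2 = (j,l).2 then (1:ℝ)/m else 0)
          else 1/(m^2:ℝ)) * v (j,l))
        = (if i = j then (1/m) * v (i,k) - (1/m^2) * ∑ l, v (i,l) else 0)
          + (1/m^2) * ∑ l, v (j,l) := by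
      intro j
      by_cases h : i = j
      · subst h
        simp only [if_pos rfl, ite_mul, zero_mul, Finset.sum_ite_eq, Finset.mem_univ,
          if_true, Finset.mul_sum]
        ring
      · simp [h, Finset.mul_sum]
    rw [Finset.sum_congr rfl (fun j _ => step j), Finset.sum_add_distrib,
      Finset.sum_ite_eq, Fintype.sum_prod_type]
    simp only [Finset.mem_univ, if_true, ← Finset.mul_sum]
    ring
  -- sum functional and block-embedding
  set σ : (Fin p → ℝ) →ₗ[ℝ] ℝ :=
    { toFun := fun c => ∑ i, c i
      map_add' := fun a b => by simp [Finset.sum_add_distrib]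
      map_smul' := fun r a => by simp [Finset.mul_sum] } with hσ
  set φ : (Fin p → ℝ) →ₗ[ℝ] (Fin p × Fin m → ℝ) := LinearMap.funLeft ℝ ℝ Prod.fst with hφ
  have hφinj : Function.Injective φ :=
    LinearMap.funLeft_injective_of_surjective ℝ ℝ _ (fun i => ⟨(i, ⟨0, hm⟩), rfl⟩)
  have hker : LinearMap.ker Q.mulVecLin = (LinearMap.ker σ).map φ := by
    ext v
    simp only [LinearMap.mem_ker, Submodule.mem_map, Matrix.mulVecLin_apply]
    constructor
    · intro hv
      have hv' : ∀ q : Fin p × Fin m, Q.mulVec v q = 0 := fun q => congrFun hv q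
      set c : Fin p → ℝ := fun i => v (i, ⟨0, hm⟩) with hc
      have hconst : ∀ i k, v (i, k) = c i := by
        intro i k
        have h1 := hv' (i, k); have h2 := hv' (i, ⟨0, hm⟩)
        rw [key] at h1 h2
        simp only at h1 h2
        have h3 : (1/m : ℝ) * v (i, k) = (1/m) * c i := by
          simp only [hc]; linarith
        exact mul_left_cancel₀ (one_div_ne_zero hm0) h3
      have hsum_i : ∀ i : Fin p, (∑ l, v (i, l)) = m * c i := by
        intro i
        simp [hconst i, Finset.sum_const, mul_comm]
      have hS : (∑ r : Fin p × Fin m, v r) = m * ∑ i, c i := by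
        rw [Fintype.sum_prod_type]
        simp [hsum_i, Finset.mul_sum]
      have hcsum : ∑ i, c i = 0 := by
        have h := hv' (⟨0, hp⟩, ⟨0, hm⟩)
        rw [key] at h
        simp only at h
        rw [hS, hsum_i, hconst] at h
        have expand : (1/(m:ℝ)^2) * ((m:ℝ) * (∑ i, c i) - (m:ℝ) * c ⟨0, hp⟩)
            = (1/m) * (∑ i, c i) - (1/m) * c ⟨0, hp⟩ := by
          field_simp
        rw [expand] at h
        have h' : (1/m : ℝ) * (∑ i, c i) = 0 := by linarith
        exact (mul_eq_zero.mp h').resolve_left (one_div_ne_zero hm0)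
      exact ⟨c, hcsum, funext fun q => (hconst q.1 q.2).symm⟩
    · rintro ⟨c, hc0, rfl⟩
      have hc0' : ∑ i, c i = 0 := hc0
      funext q
      rw [key]
      have e1 : (∑ r : Fin p × Fin m, φ c r) = 0 := by
        simp only [hφ, LinearMap.funLeft_apply]
        rw [Fintype.sum_prod_type]
        simp only [Finset.sum_const, Finset.card_univ, Fintype.card_fin, nsmul_eq_mul]
        rw [← Finset.mul_sum, hc0', mul_zero]
      have e2 : (∑ l, φ c (q.1, l)) = m * c q.1 := by
        simp [hφ, Finset.sum_const, mul_comm]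
      rw [e1, e2]
      have : φ c q = c q.1 := rfl
      rw [this]
      field_simp
      simp
  -- dimension counting
  have hdimσ : finrank ℝ (LinearMap.ker σ) = p - 1 := by
    have h := LinearMap.finrank_range_add_finrank_ker σ
    have hsurj : LinearMap.range σ = ⊤ := by
      rw [LinearMap.range_eq_top]
      intro r
      refine ⟨fun _ => r / p, ?_⟩
      have hp0 : (p : ℝ) ≠ 0 := Nat.cast_ne_zero.mpr hp.ne'
      simp only [hσ, LinearMap.coe_mk, AddHom.coe_mk, Finset.sum_const, Finset.card_univ,
        Fintype.card_fin, nsmul_eq_mul]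
      field_simp
    rw [hsurj, finrank_top, Module.finrank_self,
      Module.finrank_fintype_fun_eq_card, Fintype.card_fin] at h
    omega
  have hdimK : finrank ℝ (LinearMap.ker Q.mulVecLin) = p - 1 := by
    rw [hker, ← (Submodule.equivMapOfInjective φ hφinj (LinearMap.ker σ)).finrank_eq]
    exact hdimσ
  have hrn := LinearMap.finrank_range_add_finrank_ker Q.mulVecLin
  rw [hdimK, Module.finrank_fintype_fun_eq_card, Fintype.card_prod, Fintype.card_fin,
    Fintype.card_fin] at hrn
  have hrank : Q.rank = finrank ℝ (LinearMap.range Q.mulVecLin) := rfl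
  rw [hrank]
  obtain ⟨n, rfl⟩ := Nat.exists_eq_add_of_lt hm
  have hpm : p * (0 + n + 1) = n * p + p := by ring
  rw [hpm] at hrn
  have e : (0 + n + 1 - 1) * p = n * p := by norm_num
  rw [e]
  obtain ⟨t, ht⟩ : ∃ t, n * p = t := ⟨_, rfl⟩
  rw [ht] at hrn ⊢
  omega
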